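/- For n ≥ 0 and q ≥ 3, A_q(2n+1, 2) ≥ 2n+1. Specifically, the set Y_0 = { e_{n+1−k} + e_{n+1+k} : 0 ≤ k ≤ n } ⊆ E_q(2n+1,2) dominates every unit vector of length 2n+1, and its 2n+1 cyclic shifts are pairwise disjoint subsets of E_q(2n+1,2), each dominating every unit vector. -/

import Mathlib

open Finset

/-- ℓ1 (Hamming) weight of a `q`-ary vector of length `n`. -/
def hw {n q : ℕ} (x : Fin n → Fin q) : ℕ := ∑ k, (x k : ℕ)

/-- `E_q(n,i)`: the set of `q`-ary vectors of length `n` and weight `i`. -/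
def lev (q n i : ℕ) : Finset (Fin n → Fin q) := Finset.univ.filter (fun x => hw x = i)

/-- Coordinatewise domination `x ≤ y`. -/
def domLe {n q : ℕ} (x y : Fin n → Fin q) : Prop := ∀ k, (x k : ℕ) ≤ (y k : ℕ)

instance {n q : ℕ} (x y : Fin n → Fin q) : Decidable (domLe x y) :=
  inferInstanceAs (Decidable (∀ k, (x k : ℕ) ≤ (y k : ℕ)))

/-- `Y` covers `E_q(n,i-1)`: every vector of weight `i-1` is dominated by some `y ∈ Y`. -/
def Covers (q n i : ℕ) (Y : Finset (Fin n → Fin q)) : Prop :=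
  ∀ x ∈ lev q n (i - 1), ∃ y ∈ Y, domLe x y

/-- A codeword class at level `i`: a subset of `E_q(n,i)` covering `E_q(n,i-1)`. -/
def IsClass (q n i : ℕ) (Y : Finset (Fin n → Fin q)) : Prop :=
  Y ⊆ lev q n i ∧ Covers q n i Y

/-- `A_q(n,i)`: the maximum number of pairwise disjoint codeword classes in `E_q(n,i)`. -/
noncomputable def A (q n i : ℕ) : ℕ :=
  sSup {m | ∃ 𝒴 : Finset (Finset (Fin n → Fin q)),
    (∀ Y ∈ 𝒴, IsClass q n i Y) ∧
    (𝒴 : Set (Finset (Fin n → Fin q))).Pairwise Disjoint ∧ 𝒴.card = m}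

/-- The j-th standard unit vector of length N over the alphabet {0,…,q-1}. -/
def unitVec {N q : ℕ} [NeZero q] (j : Fin N) : Fin N → Fin q :=
  fun k => if k = j then 1 else 0

open Fin.NatCast in
/-- The class Y₀ = { e_{n+1-k} + e_{n+1+k} : 0 ≤ k ≤ n } ⊆ E_q(2n+1,2)
(0-indexed: center index n, indices n-k and n+k, taken modulo 2n+1). -/
def Y0 (n q : ℕ) [NeZero q] : Finset (Fin (2 * n + 1) → Fin q) :=
  (Finset.range (n + 1)).image
    (fun (k : ℕ) => unitVec ((⟨n, by omega⟩ : Fin (2 * n + 1)) - (k : Fin (2 * n + 1)))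
            + unitVec ((⟨n, by omega⟩ : Fin (2 * n + 1)) + (k : Fin (2 * n + 1))))

/-- Cyclic shift of a set of vectors by s. -/
def shiftC {N q : ℕ} (s : Fin N) (Y : Finset (Fin N → Fin q)) : Finset (Fin N → Fin q) :=
  Y.image (fun x => fun j => x (j - s))


section helpers
variable {N q : ℕ} [NeZero q]

lemma val1 (hq : 3 ≤ q) : ((1 : Fin q) : ℕ) = 1 := by
  rw [Fin.val_one']; exact Nat.mod_eq_of_lt (by omega)

lemma val_unit (hq : 3 ≤ q) (a k : Fin N) :
    ((unitVec a k : Fin q) : ℕ) = if k = a then 1 else 0 := by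
  unfold unitVec
  split
  · exact val1 hq
  · rfl

lemma val_add_unit (hq : 3 ≤ q) (a b k : Fin N) :
    (((unitVec a + unitVec b : Fin N → Fin q) k : Fin q) : ℕ)
      = (if k = a then 1 else 0) + (if k = b then 1 else 0) := by
  have h1 := val1 (q := q) hq
  simp only [Pi.add_apply, Fin.val_add, val_unit hq]
  rw [Nat.mod_eq_of_lt]
  split <;> split <;> omega

lemma hw_add_unit (hq : 3 ≤ q) (a b : Fin N) :
    hw (unitVec a + unitVec b : Fin N → Fin q) = 2 := by
  unfold hw
  rw [Finset.sum_congr rfl (fun k _ => val_add_unit hq a b k), Finset.sum_add_distrib]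
  simp

lemma eq_unit_of_hw_one (hq : 3 ≤ q) {x : Fin N → Fin q} (hx : hw x = 1) :
    ∃ j, x = unitVec j := by
  unfold hw at hx
  obtain ⟨j, hj⟩ : ∃ j, (x j : ℕ) ≠ 0 := by
    by_contra h'
    push_neg at h'
    simp [h'] at hx
  have hle : (x j : ℕ) ≤ 1 := by
    calc (x j : ℕ) ≤ ∑ k, (x k : ℕ) :=
          Finset.single_le_sum (f := fun k => (x k : ℕ)) (fun k _ => Nat.zero_le _) (Finset.mem_univ j)
      _ = 1 := hx
  have hxj : (x j : ℕ) = 1 := by omega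
  have hrest : ∀ k, k ≠ j → (x k : ℕ) = 0 := by
    have h0 : ∑ k ∈ Finset.univ.erase j, (x k : ℕ) = 0 := by
      have := Finset.add_sum_erase Finset.univ (fun k => (x k : ℕ)) (Finset.mem_univ j)
      beta_reduce at this
      omega
    intro k hk
    exact Finset.sum_eq_zero_iff.mp h0 k (Finset.mem_erase.mpr ⟨hk, Finset.mem_univ k⟩)
  refine ⟨j, funext fun k => ?_⟩
  by_cases hkj : k = j
  · subst hkj
    apply Fin.ext
    rw [val_unit hq, if_pos rfl, hxj]
  · apply Fin.ext
    rw [val_unit hq, if_neg hkj, hrest k hkj]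

lemma dom_unit (hq : 3 ≤ q) {j a b : Fin N} (h : j = a ∨ j = b) :
    domLe (unitVec j) (unitVec a + unitVec b : Fin N → Fin q) := by
  intro k
  rw [val_unit hq, val_add_unit hq]
  rcases h with h | h <;> subst h <;> split <;> simp_all

end helpers

section fin
open Fin.NatCast
variable {n : ℕ}

abbrev ctr (n : ℕ) : Fin (2 * n + 1) := ⟨n, by omega⟩

lemma val_natCast' (k : ℕ) (hk : k ≤ n) : ((k : Fin (2 * n + 1)) : ℕ) = k := by
  rw [Fin.val_natCast]; exact Nat.mod_eq_of_lt (by omega)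

lemma val_ctr_sub (k : ℕ) (hk : k ≤ n) :
    ((ctr n - (k : Fin (2 * n + 1))) : Fin (2 * n + 1)).val = n - k := by
  rw [Fin.sub_def]
  simp only [val_natCast' k hk]
  show (2 * n + 1 - k + n) % (2 * n + 1) = n - k
  have : 2 * n + 1 - k + n = (n - k) + (2 * n + 1) := by omega
  rw [this, Nat.add_mod_right, Nat.mod_eq_of_lt (by omega)]

lemma val_ctr_add (k : ℕ) (hk : k ≤ n) :
    ((ctr n + (k : Fin (2 * n + 1))) : Fin (2 * n + 1)).val = n + k := by
  rw [Fin.add_def]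
  simp only [val_natCast' k hk]
  show (n + k) % (2 * n + 1) = n + k
  exact Nat.mod_eq_of_lt (by omega)

lemma cover_index (j : Fin (2 * n + 1)) :
    ∃ k ≤ n, j = ctr n - (k : Fin (2 * n + 1)) ∨ j = ctr n + (k : Fin (2 * n + 1)) := by
  by_cases hj : (j : ℕ) ≤ n
  · refine ⟨n - (j : ℕ), by omega, Or.inl ?_⟩
    apply Fin.ext
    rw [val_ctr_sub _ (by omega)]
    omega
  · refine ⟨(j : ℕ) - n, by omega, Or.inr ?_⟩
    apply Fin.ext
    rw [val_ctr_add _ (by omega)]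
    omega

end fin

section zmod
variable {N q : ℕ} [NeZero q]

noncomputable def Fz (x : Fin N → Fin q) : ZMod N :=
  ∑ j, ((x j : ℕ) : ZMod N) * ((j : ℕ) : ZMod N)

lemma Fz_unit_sum (hq : 3 ≤ q) (a b : Fin N) :
    Fz (unitVec a + unitVec b : Fin N → Fin q) = ((a : ℕ) : ZMod N) + ((b : ℕ) : ZMod N) := by
  unfold Fz
  rw [Finset.sum_congr rfl (fun j _ => by rw [val_add_unit hq a b j])]
  push_cast
  simp [add_mul, Finset.sum_add_distrib, ite_mul, Finset.sum_ite_eq']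

lemma cast_val_add (a b : Fin N) :
    (((a + b : Fin N) : ℕ) : ZMod N) = ((a : ℕ) : ZMod N) + ((b : ℕ) : ZMod N) := by
  rw [Fin.val_add, ZMod.natCast_mod]
  push_cast
  ring

end zmod

section main
open Fin.NatCast
variable {n q : ℕ} [NeZero q]

lemma Y0_eq (n q : ℕ) [NeZero q] : Y0 n q =
    (Finset.range (n + 1)).image
      (fun (k : ℕ) => (unitVec (ctr n - (k : Fin (2 * n + 1))) + unitVec (ctr n + (k : Fin (2 * n + 1))) : Fin (2 * n + 1) → Fin q)) := rfl

lemma shift_unit {N : ℕ} [NeZero N] (a b s : Fin N) :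
    (fun j => (unitVec a + unitVec b : Fin N → Fin q) (j - s))
      = unitVec (a + s) + unitVec (b + s) := by
  funext j
  simp only [Pi.add_apply, unitVec, sub_eq_iff_eq_add]

lemma mem_shiftY0 {s : Fin (2 * n + 1)} {x : Fin (2 * n + 1) → Fin q} :
    x ∈ shiftC s (Y0 n q) ↔ ∃ k ≤ n,
      x = unitVec (ctr n - (k : Fin (2 * n + 1)) + s) + unitVec (ctr n + (k : Fin (2 * n + 1)) + s) := by
  rw [Y0_eq]
  simp only [shiftC, Finset.mem_image, Finset.mem_range, Nat.lt_succ_iff]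
  constructor
  · rintro ⟨y, ⟨k, hk, rfl⟩, rfl⟩
    exact ⟨k, hk, shift_unit _ _ s⟩
  · rintro ⟨k, hk, rfl⟩
    exact ⟨_, ⟨k, hk, rfl⟩, shift_unit _ _ s⟩

lemma Fz_shiftY0 (hq : 3 ≤ q) {s : Fin (2 * n + 1)} {x : Fin (2 * n + 1) → Fin q}
    (hx : x ∈ shiftC s (Y0 n q)) :
    Fz x = ((2 * n : ℕ) : ZMod (2 * n + 1)) + 2 * ((s : ℕ) : ZMod (2 * n + 1)) := by
  obtain ⟨k, hk, rfl⟩ := mem_shiftY0.mp hx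
  rw [Fz_unit_sum hq, cast_val_add, cast_val_add, val_ctr_sub k hk, val_ctr_add k hk]
  have : ((n - k : ℕ) : ZMod (2 * n + 1)) + ((n + k : ℕ) : ZMod (2 * n + 1))
      = ((2 * n : ℕ) : ZMod (2 * n + 1)) := by
    rw [← Nat.cast_add]
    congr 1
    omega
  push_cast at this ⊢
  linear_combination this

lemma disjoint_shifts (hq : 3 ≤ q) {s s' : Fin (2 * n + 1)} (h : s ≠ s') :
    Disjoint (shiftC s (Y0 n q)) (shiftC s' (Y0 n q)) := by
  rw [Finset.disjoint_left]
  intro x hx hx'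
  have h1 := Fz_shiftY0 hq hx
  have h2 := Fz_shiftY0 hq hx'
  rw [h1] at h2
  have h3 : ((2 * (s : ℕ) : ℕ) : ZMod (2 * n + 1)) = ((2 * (s' : ℕ) : ℕ) : ZMod (2 * n + 1)) := by
    push_cast at h2 ⊢
    linear_combination h2
  rw [ZMod.natCast_eq_natCast_iff] at h3
  have hcop : Nat.gcd (2 * n + 1) 2 = 1 := by
    rw [Nat.gcd_comm, Nat.gcd_rec]
    have : (2 * n + 1) % 2 = 1 := by omega
    rw [this]
    rfl
  have h4 : (s : ℕ) ≡ (s' : ℕ) [MOD 2 * n + 1] := Nat.ModEq.cancel_left_of_coprime hcop h3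
  have h5 : (s : ℕ) = (s' : ℕ) := by
    have := h4
    unfold Nat.ModEq at this
    rw [Nat.mod_eq_of_lt s.isLt, Nat.mod_eq_of_lt s'.isLt] at this
    exact this
  exact h (Fin.ext h5)

lemma isClass_shift (hq : 3 ≤ q) (s : Fin (2 * n + 1)) :
    IsClass q (2 * n + 1) 2 (shiftC s (Y0 n q)) := by
  constructor
  · intro x hx
    obtain ⟨k, hk, rfl⟩ := mem_shiftY0.mp hx
    simp only [lev, Finset.mem_filter, Finset.mem_univ, true_and]
    exact hw_add_unit hq _ _
  · intro x hx
    simp only [lev, Finset.mem_filter, Finset.mem_univ, true_and] at hx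
    obtain ⟨j, rfl⟩ := eq_unit_of_hw_one hq hx
    obtain ⟨k, hk, hor⟩ := cover_index (j - s)
    refine ⟨_, mem_shiftY0.mpr ⟨k, hk, rfl⟩, dom_unit hq ?_⟩
    rcases hor with h | h
    · exact Or.inl (by rw [← sub_eq_iff_eq_add]; exact h)
    · exact Or.inr (by rw [← sub_eq_iff_eq_add]; exact h)

lemma shiftC_zero {N : ℕ} [NeZero N] (Y : Finset (Fin N → Fin q)) : shiftC 0 Y = Y := by
  unfold shiftC
  simp [sub_zero]

lemma Y0_nonempty (n q : ℕ) [NeZero q] (s : Fin (2 * n + 1)) :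
    (shiftC s (Y0 n q)).Nonempty :=
  ⟨_, mem_shiftY0.mpr ⟨0, Nat.zero_le n, rfl⟩⟩

end main

/-- For n ≥ 0 and q ≥ 3, A_q(2n+1,2) ≥ 2n+1. Specifically, Y₀ is a subset of
E_q(2n+1,2) dominating every unit vector (i.e., a codeword class), and its 2n+1 cyclic
shifts are pairwise disjoint codeword classes in E_q(2n+1,2). -/
theorem stmt_14 (n q : ℕ) (hq : 3 ≤ q) [NeZero q] :
    2 * n + 1 ≤ A q (2 * n + 1) 2 ∧
    IsClass q (2 * n + 1) 2 (Y0 n q) ∧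
    (∀ s s' : Fin (2 * n + 1), s ≠ s' →
      Disjoint (shiftC s (Y0 n q)) (shiftC s' (Y0 n q))) ∧
    (∀ s : Fin (2 * n + 1), IsClass q (2 * n + 1) 2 (shiftC s (Y0 n q))) := by
  have hclass : ∀ s : Fin (2 * n + 1), IsClass q (2 * n + 1) 2 (shiftC s (Y0 n q)) :=
    isClass_shift hq
  have hY0 : IsClass q (2 * n + 1) 2 (Y0 n q) := by
    have := hclass 0
    rwa [shiftC_zero] at this
  have hdisj : ∀ s s' : Fin (2 * n + 1), s ≠ s' →
      Disjoint (shiftC s (Y0 n q)) (shiftC s' (Y0 n q)) :=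
    fun s s' h => disjoint_shifts hq h
  refine ⟨?_, hY0, hdisj, hclass⟩
  have hinj : Function.Injective (fun s : Fin (2 * n + 1) => shiftC s (Y0 n q)) := by
    intro s s' hss
    simp only at hss
    by_contra hne
    have hd := hdisj s s' hne
    rw [hss] at hd
    exact (Y0_nonempty n q s').ne_empty (disjoint_self.mp hd)
  have hmem : (2 * n + 1) ∈ {m | ∃ 𝒴 : Finset (Finset (Fin (2 * n + 1) → Fin q)),
      (∀ Y ∈ 𝒴, IsClass q (2 * n + 1) 2 Y) ∧
      (𝒴 : Set (Finset (Fin (2 * n + 1) → Fin q))).Pairwise Disjoint ∧ 𝒴.card = 2 * n + 1} := by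
    refine ⟨Finset.univ.image (fun s : Fin (2 * n + 1) => shiftC s (Y0 n q)), ?_, ?_, ?_⟩
    · intro Y hY
      obtain ⟨s, -, rfl⟩ := Finset.mem_image.mp hY
      exact hclass s
    · intro Y hY Y' hY' hne
      obtain ⟨s, -, rfl⟩ := Finset.mem_image.mp (Finset.mem_coe.mp hY)
      obtain ⟨s', -, rfl⟩ := Finset.mem_image.mp (Finset.mem_coe.mp hY')
      exact hdisj s s' (fun h => hne (by rw [h]))
    · rw [Finset.card_image_of_injective _ hinj, Finset.card_univ, Fintype.card_fin]
  have hbdd : BddAbove {m | ∃ 𝒴 : Finset (Finset (Fin (2 * n + 1) → Fin q)),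
      (∀ Y ∈ 𝒴, IsClass q (2 * n + 1) 2 Y) ∧
      (𝒴 : Set (Finset (Fin (2 * n + 1) → Fin q))).Pairwise Disjoint ∧ 𝒴.card = m} := by
    refine ⟨Fintype.card (Finset (Fin (2 * n + 1) → Fin q)), ?_⟩
    rintro m ⟨𝒵, -, -, rfl⟩
    exact le_trans (Finset.card_le_univ 𝒵) (le_of_eq Finset.card_univ)
  exact le_csSup hbdd hmem
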